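/- Let n ≥ 2, let c ∈ ℝ, let h be a real symmetric n×n matrix, set H = trace(h) and T = h - (H/n)·I. Define R_{ikjl} = c(δ_{ij}δ_{kl} - δ_{il}δ_{jk}) + h_{ij}h_{kl} - h_{il}h_{jk} and Ric_{kl} = ∑_i R_{ikil}. Then -∑_{i,k,j,l} R_{ikjl} T_{ij} T_{kl} + ∑_{i,j,k} Ric_{jk} T_{ij} T_{ik} ≥ ‖T‖² · ( (1/n)·H² - ‖T‖² - ((n-2)/√(n(n-1)))·|H|·‖T‖ + n·c ), where ‖T‖ = √(trace(T²)) is the Frobenius norm. -/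

import Mathlib

open Finset Matrix

section helpers
variable {n : ℕ}

private lemma sum_eq_2 {f g : Fin n → Fin n → ℝ} (hfg : ∀ a b, f a b = g a b) :
    ∑ a, ∑ b, f a b = ∑ a, ∑ b, g a b :=
  Finset.sum_congr rfl fun a _ => Finset.sum_congr rfl fun b _ => hfg a b

private lemma sum_eq_3 {f g : Fin n → Fin n → Fin n → ℝ} (hfg : ∀ a b c, f a b c = g a b c) :
    ∑ a, ∑ b, ∑ c, f a b c = ∑ a, ∑ b, ∑ c, g a b c :=
  Finset.sum_congr rfl fun a _ => Finset.sum_congr rfl fun b _ =>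
    Finset.sum_congr rfl fun c _ => hfg a b c

private lemma sum_eq_4 {f g : Fin n → Fin n → Fin n → Fin n → ℝ}
    (hfg : ∀ a b c d, f a b c d = g a b c d) :
    ∑ a, ∑ b, ∑ c, ∑ d, f a b c d = ∑ a, ∑ b, ∑ c, ∑ d, g a b c d :=
  Finset.sum_congr rfl fun a _ => Finset.sum_congr rfl fun b _ =>
    Finset.sum_congr rfl fun c _ => Finset.sum_congr rfl fun d _ => hfg a b c d

private lemma fact11 (f g : Fin n → ℝ) :
    ∑ a, ∑ b, f a * g b = (∑ a, f a) * (∑ b, g b) :=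
  (Finset.sum_mul_sum _ _ _ _).symm

private lemma const_mul_sum2 (r : ℝ) (f : Fin n → Fin n → ℝ) :
    ∑ a, ∑ b, r * f a b = r * ∑ a, ∑ b, f a b := by
  rw [Finset.mul_sum]
  exact Finset.sum_congr rfl fun a _ => (Finset.mul_sum _ _ _).symm

private lemma const_mul_sum3 (r : ℝ) (f : Fin n → Fin n → Fin n → ℝ) :
    ∑ a, ∑ b, ∑ c, r * f a b c = r * ∑ a, ∑ b, ∑ c, f a b c := by
  rw [Finset.mul_sum]
  exact Finset.sum_congr rfl fun a _ => const_mul_sum2 r (f a)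

private lemma fact1_2 (f : Fin n → ℝ) (g : Fin n → Fin n → ℝ) :
    ∑ a, ∑ b, ∑ c, f a * g b c = (∑ a, f a) * (∑ b, ∑ c, g b c) := by
  rw [Finset.sum_mul_sum]
  exact Finset.sum_congr rfl fun a _ => Finset.sum_congr rfl fun b _ => (Finset.mul_sum _ _ _).symm

private lemma fact2_1 (g : Fin n → Fin n → ℝ) (f : Fin n → ℝ) :
    ∑ a, ∑ b, ∑ c, g a c * f b = (∑ a, ∑ c, g a c) * (∑ b, f b) := by
  rw [Finset.sum_mul]
  refine Finset.sum_congr rfl fun a _ => ?_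
  rw [Finset.sum_comm, Finset.sum_mul_sum]

private lemma fact22 (f g : Fin n → Fin n → ℝ) :
    ∑ a, ∑ b, ∑ c, ∑ d, f a c * g b d = (∑ a, ∑ c, f a c) * (∑ b, ∑ d, g b d) := by
  rw [Finset.sum_mul_sum]
  exact Finset.sum_congr rfl fun a _ => Finset.sum_congr rfl fun b _ =>
    (Finset.sum_mul_sum _ _ _ _).symm

private lemma fact_inner3 (f : Fin n → ℝ) (g : Fin n → Fin n → Fin n → ℝ) :
    ∑ a, ∑ b, ∑ c, ∑ d, f d * g a b c = (∑ d, f d) * (∑ a, ∑ b, ∑ c, g a b c) := by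
  rw [Finset.mul_sum]
  refine Finset.sum_congr rfl fun a _ => ?_
  rw [Finset.mul_sum]
  refine Finset.sum_congr rfl fun b _ => ?_
  rw [Finset.mul_sum]
  exact Finset.sum_congr rfl fun c _ => (Finset.sum_mul _ _ _).symm

private lemma fact_inner2 (f : Fin n → ℝ) (g : Fin n → Fin n → ℝ) :
    ∑ a, ∑ b, ∑ d, f d * g a b = (∑ d, f d) * (∑ a, ∑ b, g a b) := by
  rw [Finset.mul_sum]
  refine Finset.sum_congr rfl fun a _ => ?_
  rw [Finset.mul_sum]
  exact Finset.sum_congr rfl fun b _ => (Finset.sum_mul _ _ _).symm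

private lemma swap3 (f : Fin n → Fin n → Fin n → ℝ) :
    ∑ a, ∑ b, ∑ c, f a b c = ∑ a, ∑ c, ∑ b, f a b c :=
  Finset.sum_congr rfl fun a _ => Finset.sum_comm

private lemma swap23 (f : Fin n → Fin n → Fin n → Fin n → ℝ) :
    ∑ a, ∑ b, ∑ c, ∑ d, f a b c d = ∑ a, ∑ c, ∑ b, ∑ d, f a b c d :=
  Finset.sum_congr rfl fun a _ => Finset.sum_comm

private lemma swap34 (f : Fin n → Fin n → Fin n → Fin n → ℝ) :
    ∑ a, ∑ b, ∑ c, ∑ d, f a b c d = ∑ a, ∑ b, ∑ d, ∑ c, f a b c d :=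
  Finset.sum_congr rfl fun a _ => Finset.sum_congr rfl fun b _ => Finset.sum_comm

end helpers

private lemma quad_eval {n : ℕ} (c e : ℝ) (T h : Matrix (Fin n) (Fin n) ℝ)
    (hh : ∀ i j, h i j = T i j + e * (if i = j then (1:ℝ) else 0))
    (hTsym : ∀ i j, T i j = T j i)
    (htr : ∑ i, T i i = 0)
    (R : Fin n → Fin n → Fin n → Fin n → ℝ)
    (hR : ∀ i k j l, R i k j l =
      c * ((if i = j then (1 : ℝ) else 0) * (if k = l then (1 : ℝ) else 0) -
           (if i = l then (1 : ℝ) else 0) * (if j = k then (1 : ℝ) else 0)) +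
      h i j * h k l - h i l * h j k) :
    ∑ i, ∑ k, ∑ j, ∑ l, R i k j l * T i j * T k l =
      -(c*(∑ a, ∑ b, T a b * T b a)) + (∑ a, ∑ b, T a b * T b a)^2
      - (∑ a, ∑ b, ∑ k, ∑ l, T a b * T b k * T k l * T l a)
      - 2*e*(∑ a, ∑ b, ∑ k, T a b * T b k * T k a)
      - e^2*(∑ a, ∑ b, T a b * T b a) := by
  have hP : (∑ a, ∑ b, T a b * T a b) = ∑ a, ∑ b, T a b * T b a :=
    sum_eq_2 fun a b => by nth_rewrite 2 [hTsym a b]; rfl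
  have hG1 : (∑ a, ∑ b, c * T a a * T b b) = 0 := by
    rw [fact11 (fun a => c * T a a) (fun b => T b b), htr, mul_zero]
  have hG2 : (∑ a, ∑ b, c * T a b * T b a) = c * ∑ a, ∑ b, T a b * T b a := by
    rw [← const_mul_sum2 c (fun a b => T a b * T b a)]
    exact sum_eq_2 fun a b => by ring
  have hG3 : (∑ a, ∑ b, ∑ k, ∑ l, T a k * T b l * T a k * T b l)
      = (∑ a, ∑ b, T a b * T b a)^2 := by
    calc ∑ a, ∑ b, ∑ k, ∑ l, T a k * T b l * T a k * T b l
        = ∑ a, ∑ b, ∑ k, ∑ l, (fun a k => T a k * T a k) a k * (fun b l => T b l * T b l) b l :=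
          sum_eq_4 fun a b k l => by ring
      _ = (∑ a, ∑ k, T a k * T a k) * (∑ b, ∑ l, T b l * T b l) := fact22 _ _
      _ = (∑ a, ∑ b, T a b * T b a)^2 := by rw [hP]; ring
  have hG4 : (∑ a, ∑ b, ∑ k, e * T b k * T a a * T b k) = 0 := by
    calc ∑ a, ∑ b, ∑ k, e * T b k * T a a * T b k
        = ∑ a, ∑ b, ∑ k, (fun a => T a a) a * (fun b k => e * T b k * T b k) b k :=
          sum_eq_3 fun a b k => by ring
      _ = (∑ a, T a a) * (∑ b, ∑ k, e * T b k * T b k) := fact1_2 _ _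
      _ = 0 := by rw [htr, zero_mul]
  have hG5 : (∑ a, ∑ b, ∑ k, T a k * e * T a k * T b b) = 0 := by
    calc ∑ a, ∑ b, ∑ k, T a k * e * T a k * T b b
        = ∑ a, ∑ b, ∑ k, (fun a k => e * T a k * T a k) a k * (fun b => T b b) b :=
          sum_eq_3 fun a b k => by ring
      _ = (∑ a, ∑ k, e * T a k * T a k) * (∑ b, T b b) := fact2_1 _ _
      _ = 0 := by rw [htr, mul_zero]
  have hG6 : (∑ a, ∑ b, e * e * T a a * T b b) = 0 := by
    rw [fact11 (fun a => e * e * T a a) (fun b => T b b), htr, mul_zero]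
  have hG7 : (∑ a, ∑ b, ∑ k, ∑ l, T a l * T k b * T a k * T b l)
      = ∑ a, ∑ b, ∑ k, ∑ l, T a b * T b k * T k l * T l a := by
    calc ∑ a, ∑ b, ∑ k, ∑ l, T a l * T k b * T a k * T b l
        = ∑ a, ∑ b, ∑ k, ∑ l, T a k * T k b * T b l * T l a :=
          sum_eq_4 fun a b k l => by rw [hTsym a l]; ring
      _ = ∑ a, ∑ k, ∑ b, ∑ l, T a k * T k b * T b l * T l a :=
          swap23 (fun a b k l => T a k * T k b * T b l * T l a)
  have hG8 : (∑ a, ∑ b, ∑ k, e * T k b * T a k * T b a)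
      = e * ∑ a, ∑ b, ∑ k, T a b * T b k * T k a := by
    calc ∑ a, ∑ b, ∑ k, e * T k b * T a k * T b a
        = ∑ a, ∑ b, ∑ k, e * (T a k * T k b * T b a) := sum_eq_3 fun a b k => by ring
      _ = ∑ a, ∑ k, ∑ b, e * (T a k * T k b * T b a) :=
          swap3 (fun a b k => e * (T a k * T k b * T b a))
      _ = e * ∑ a, ∑ b, ∑ k, T a b * T b k * T k a := const_mul_sum3 e _
  have hG9 : (∑ a, ∑ b, ∑ k, T a k * e * T a b * T b k)
      = e * ∑ a, ∑ b, ∑ k, T a b * T b k * T k a := by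
    calc ∑ a, ∑ b, ∑ k, T a k * e * T a b * T b k
        = ∑ a, ∑ b, ∑ k, e * (T a b * T b k * T k a) :=
          sum_eq_3 fun a b k => by rw [hTsym a k]; ring
      _ = e * ∑ a, ∑ b, ∑ k, T a b * T b k * T k a := const_mul_sum3 e _
  have hG10 : (∑ a, ∑ b, e * e * T a b * T b a) = e * e * ∑ a, ∑ b, T a b * T b a := by
    rw [← const_mul_sum2 (e*e) (fun a b => T a b * T b a)]
    exact sum_eq_2 fun a b => by ring
  simp only [hR, hh]
  simp only [mul_ite, ite_mul, mul_one, one_mul, mul_zero, zero_mul, sub_mul, add_mul,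
    mul_add, mul_sub, add_mul, sub_mul,
    Finset.sum_sub_distrib, Finset.sum_add_distrib, Finset.sum_ite_eq, Finset.sum_ite_eq',
    Finset.mem_univ, if_true, Finset.sum_ite_irrel, Finset.sum_const_zero]
  rw [hG1, hG2, hG3, hG4, hG5, hG6, hG7, hG8, hG9, hG10]
  ring

private lemma ric_eval {n : ℕ} (c e : ℝ) (T h : Matrix (Fin n) (Fin n) ℝ)
    (hh : ∀ i j, h i j = T i j + e * (if i = j then (1:ℝ) else 0))
    (hTsym : ∀ i j, T i j = T j i)
    (htr : ∑ i, T i i = 0)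
    (R : Fin n → Fin n → Fin n → Fin n → ℝ)
    (hR : ∀ i k j l, R i k j l =
      c * ((if i = j then (1 : ℝ) else 0) * (if k = l then (1 : ℝ) else 0) -
           (if i = l then (1 : ℝ) else 0) * (if j = k then (1 : ℝ) else 0)) +
      h i j * h k l - h i l * h j k)
    (Ric : Fin n → Fin n → ℝ) (hRic : ∀ k l, Ric k l = ∑ i, R i k i l) :
    (∑ i, ∑ j, ∑ k, Ric j k * T i j * T i k) =
      ((n:ℝ)*c - c)*(∑ a, ∑ b, T a b * T b a)
      + ((n:ℝ)*e - 2*e)*(∑ a, ∑ b, ∑ k, T a b * T b k * T k a)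
      + ((n:ℝ)*(e*e) - e*e)*(∑ a, ∑ b, T a b * T b a)
      - (∑ a, ∑ b, ∑ k, ∑ l, T a b * T b k * T k l * T l a) := by
  have hF1 : (∑ a, ∑ b, (n:ℝ) * c * T a b * T a b)
      = ((n:ℝ)*c) * ∑ a, ∑ b, T a b * T b a := by
    rw [← const_mul_sum2 ((n:ℝ)*c) (fun a b => T a b * T b a)]
    exact sum_eq_2 fun a b => by rw [hTsym b a]; ring
  have hF2 : (∑ a, ∑ b, c * T a b * T a b) = c * ∑ a, ∑ b, T a b * T b a := by
    rw [← const_mul_sum2 c (fun a b => T a b * T b a)]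
    exact sum_eq_2 fun a b => by rw [hTsym b a]; ring
  have hF3 : (∑ a, ∑ b, ∑ k, ∑ i, T i i * T b k * T a b * T a k) = 0 := by
    calc ∑ a, ∑ b, ∑ k, ∑ i, T i i * T b k * T a b * T a k
        = ∑ a, ∑ b, ∑ k, ∑ i, (fun i => T i i) i * (fun a b k => T b k * T a b * T a k) a b k :=
          sum_eq_4 fun a b k i => by ring
      _ = (∑ i, T i i) * (∑ a, ∑ b, ∑ k, T b k * T a b * T a k) := fact_inner3 _ _
      _ = 0 := by rw [htr, zero_mul]
  have hF4 : (∑ a, ∑ b, ∑ k, (n:ℝ) * (e * T b k) * T a b * T a k)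
      = ((n:ℝ)*e) * ∑ a, ∑ b, ∑ k, T a b * T b k * T k a := by
    calc ∑ a, ∑ b, ∑ k, (n:ℝ) * (e * T b k) * T a b * T a k
        = ∑ a, ∑ b, ∑ k, ((n:ℝ)*e) * (T a b * T b k * T k a) :=
          sum_eq_3 fun a b k => by rw [hTsym a k]; ring
      _ = ((n:ℝ)*e) * ∑ a, ∑ b, ∑ k, T a b * T b k * T k a := const_mul_sum3 _ _
  have hF5 : (∑ a, ∑ b, ∑ i, T i i * e * T a b * T a b) = 0 := by
    calc ∑ a, ∑ b, ∑ i, T i i * e * T a b * T a b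
        = ∑ a, ∑ b, ∑ i, (fun i => T i i) i * (fun a b => e * T a b * T a b) a b :=
          sum_eq_3 fun a b i => by ring
      _ = (∑ i, T i i) * (∑ a, ∑ b, e * T a b * T a b) := fact_inner2 _ _
      _ = 0 := by rw [htr, zero_mul]
  have hF6 : (∑ a, ∑ b, (n:ℝ) * (e * e) * T a b * T a b)
      = ((n:ℝ)*(e*e)) * ∑ a, ∑ b, T a b * T b a := by
    rw [← const_mul_sum2 ((n:ℝ)*(e*e)) (fun a b => T a b * T b a)]
    exact sum_eq_2 fun a b => by rw [hTsym b a]; ring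
  have hF7 : (∑ a, ∑ b, ∑ k, ∑ i, T i k * T i b * T a b * T a k)
      = ∑ a, ∑ b, ∑ k, ∑ l, T a b * T b k * T k l * T l a := by
    calc ∑ a, ∑ b, ∑ k, ∑ i, T i k * T i b * T a b * T a k
        = ∑ a, ∑ b, ∑ k, ∑ i, T a b * T b i * T i k * T k a :=
          sum_eq_4 fun a b k i => by rw [hTsym i b, hTsym a k]; ring
      _ = ∑ a, ∑ b, ∑ i, ∑ k, T a b * T b i * T i k * T k a :=
          swap34 (fun a b k i => T a b * T b i * T i k * T k a)
  have hF8 : (∑ a, ∑ b, ∑ k, e * T k b * T a b * T a k)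
      = e * ∑ a, ∑ b, ∑ k, T a b * T b k * T k a := by
    calc ∑ a, ∑ b, ∑ k, e * T k b * T a b * T a k
        = ∑ a, ∑ b, ∑ k, e * (T a b * T b k * T k a) :=
          sum_eq_3 fun a b k => by rw [hTsym k b, hTsym a k]; ring
      _ = e * ∑ a, ∑ b, ∑ k, T a b * T b k * T k a := const_mul_sum3 _ _
  have hF9 : (∑ a, ∑ b, ∑ k, T b k * e * T a b * T a k)
      = e * ∑ a, ∑ b, ∑ k, T a b * T b k * T k a := by
    calc ∑ a, ∑ b, ∑ k, T b k * e * T a b * T a k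
        = ∑ a, ∑ b, ∑ k, e * (T a b * T b k * T k a) :=
          sum_eq_3 fun a b k => by rw [hTsym a k]; ring
      _ = e * ∑ a, ∑ b, ∑ k, T a b * T b k * T k a := const_mul_sum3 _ _
  have hF10 : (∑ a, ∑ b, e * e * T a b * T a b) = (e*e) * ∑ a, ∑ b, T a b * T b a := by
    rw [← const_mul_sum2 (e*e) (fun a b => T a b * T b a)]
    exact sum_eq_2 fun a b => by rw [hTsym b a]; ring
  conv_lhs => simp only [hRic, hR, hh]
  conv_lhs =>
    simp only [mul_ite, ite_mul, mul_one, one_mul, mul_zero, zero_mul, sub_mul, add_mul,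
      mul_add, mul_sub, add_mul, sub_mul, Finset.sum_mul, Finset.mul_sum,
      Finset.sum_sub_distrib, Finset.sum_add_distrib, Finset.sum_ite_eq, Finset.sum_ite_eq',
      Finset.mem_univ, if_true, Finset.sum_ite_irrel, Finset.sum_const_zero, Finset.sum_const,
      Finset.card_univ, Fintype.card_fin, nsmul_eq_mul]
  rw [hF1, hF2, hF3, hF4, hF5, hF6, hF7, hF8, hF9, hF10]
  ring

private lemma okumura_one {n : ℕ} (hn : 2 ≤ n) (x : Fin n → ℝ) (hx : ∑ i, x i = 0) :
    ∑ i, (x i)^3 ≤ (((n:ℝ) - 2) / Real.sqrt ((n:ℝ) * ((n:ℝ)-1))) *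
      ((∑ i, (x i)^2) * Real.sqrt (∑ i, (x i)^2)) := by
  have hn2 : (2:ℝ) ≤ (n:ℝ) := by exact_mod_cast hn
  set t : ℝ := ∑ i, (x i)^2 with ht_def
  have ht : 0 ≤ t := Finset.sum_nonneg fun i _ => sq_nonneg _
  have hn1 : (0:ℝ) ≤ (n:ℝ)-1 := by linarith
  have hnn : (0:ℝ) < (n:ℝ) := by linarith
  set M : ℝ := Real.sqrt (((n:ℝ)-1) * t / n) with hM_def
  have hM0 : 0 ≤ M := Real.sqrt_nonneg _
  have hM2 : (n:ℝ) * M^2 = ((n:ℝ)-1) * t := by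
    rw [hM_def, Real.sq_sqrt (div_nonneg (mul_nonneg hn1 ht) hnn.le)]
    field_simp
  have hbound : ∀ i, x i ≤ M := by
    intro i
    have h1 : (∑ j ∈ univ.erase i, x j) = - x i := by
      rw [Finset.sum_erase_eq_sub (Finset.mem_univ i), hx]; ring
    have h3 : ∑ j ∈ univ.erase i, (x j)^2 = t - (x i)^2 := by
      rw [Finset.sum_erase_eq_sub (Finset.mem_univ i)]
    have h2 := sq_sum_le_card_mul_sum_sq (s := univ.erase i) (f := x)
    rw [h1, h3, Finset.card_erase_of_mem (Finset.mem_univ i), Finset.card_univ,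
      Fintype.card_fin] at h2
    have hcard : ((n - 1 : ℕ) : ℝ) = (n:ℝ) - 1 := by
      have : 1 ≤ n := by omega
      push_cast [Nat.cast_sub this]; ring
    rw [hcard] at h2
    have h4 : (x i)^2 ≤ M^2 := by nlinarith [h2, hM2, sq_nonneg (x i)]
    calc x i ≤ |x i| := le_abs_self _
      _ = Real.sqrt ((x i)^2) := (Real.sqrt_sq_eq_abs _).symm
      _ ≤ Real.sqrt (M^2) := Real.sqrt_le_sqrt h4
      _ = M := Real.sqrt_sq hM0
  have hpt : ∀ i, ((n:ℝ)-1)^2 * (x i)^3 ≤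
      ((n:ℝ)-1)*((n:ℝ)-3)*M*(x i)^2 + (2*(n:ℝ)-3)*M^2*(x i) + M^3 := by
    intro i
    have key : (x i - M) * (((n:ℝ)-1)*(x i) + M)^2 ≤ 0 :=
      mul_nonpos_of_nonpos_of_nonneg (by linarith [hbound i]) (sq_nonneg _)
    nlinarith [key]
  have hsum : ((n:ℝ)-1)^2 * (∑ i, (x i)^3) ≤
      ((n:ℝ)-1)*((n:ℝ)-3)*M*t + (n:ℝ)*M^3 := by
    calc ((n:ℝ)-1)^2 * (∑ i, (x i)^3) = ∑ i, ((n:ℝ)-1)^2 * (x i)^3 := Finset.mul_sum _ _ _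
      _ ≤ ∑ i, (((n:ℝ)-1)*((n:ℝ)-3)*M*(x i)^2 + (2*(n:ℝ)-3)*M^2*(x i) + M^3) :=
          Finset.sum_le_sum (fun i _ => hpt i)
      _ = ((n:ℝ)-1)*((n:ℝ)-3)*M*t + (2*(n:ℝ)-3)*M^2*(∑ i, x i) + (n:ℝ)*M^3 := by
          rw [Finset.sum_add_distrib, Finset.sum_add_distrib, ← Finset.mul_sum, ← Finset.mul_sum,
            Finset.sum_const, Finset.card_univ, Fintype.card_fin, nsmul_eq_mul]
      _ = ((n:ℝ)-1)*((n:ℝ)-3)*M*t + (n:ℝ)*M^3 := by rw [hx]; ring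
  have h5 : ((n:ℝ)-1)^2 * (∑ i, (x i)^3) ≤ ((n:ℝ)-1)*(((n:ℝ)-2)*(M*t)) := by
    have hM3 : (n:ℝ)*M^3 = ((n:ℝ)-1)*t*M := by linear_combination M * hM2
    linarith [hsum, hM3]
  set s : ℝ := Real.sqrt ((n:ℝ) * ((n:ℝ)-1)) with hs_def
  have hs : 0 < s := Real.sqrt_pos.2 (by nlinarith)
  have hMs : M * s = ((n:ℝ)-1) * Real.sqrt t := by
    rw [hM_def, hs_def, ← Real.sqrt_mul (div_nonneg (mul_nonneg hn1 ht) hnn.le)]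
    rw [show ((n:ℝ)-1)*t/n*((n:ℝ)*((n:ℝ)-1)) = (((n:ℝ)-1))^2 * t by field_simp]
    rw [Real.sqrt_mul (sq_nonneg _), Real.sqrt_sq (by linarith)]
  have hpos : (0:ℝ) < ((n:ℝ)-1)^2 := by nlinarith
  have h6 : ((n:ℝ)-1)^2 * ((∑ i, (x i)^3) * s) ≤
      ((n:ℝ)-1)^2 * (((n:ℝ)-2)*(t*Real.sqrt t)) := by
    calc ((n:ℝ)-1)^2 * ((∑ i, (x i)^3) * s) = (((n:ℝ)-1)^2 * (∑ i, (x i)^3))*s := by ring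
      _ ≤ (((n:ℝ)-1)*(((n:ℝ)-2)*(M*t)))*s := mul_le_mul_of_nonneg_right h5 hs.le
      _ = (((n:ℝ)-1)*(((n:ℝ)-2)*t))*(M*s) := by ring
      _ = ((n:ℝ)-1)^2 * (((n:ℝ)-2)*(t*Real.sqrt t)) := by rw [hMs]; ring
  have h7 : (∑ i, (x i)^3) * s ≤ ((n:ℝ)-2)*(t*Real.sqrt t) :=
    le_of_mul_le_mul_left h6 hpos
  rw [div_mul_eq_mul_div, le_div_iff₀ hs]
  linarith [h7]

private lemma okumura_abs {n : ℕ} (hn : 2 ≤ n) (x : Fin n → ℝ) (hx : ∑ i, x i = 0) :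
    |∑ i, (x i)^3| ≤ (((n:ℝ) - 2) / Real.sqrt ((n:ℝ) * ((n:ℝ)-1))) *
      ((∑ i, (x i)^2) * Real.sqrt (∑ i, (x i)^2)) := by
  have hu := okumura_one hn x hx
  have hl := okumura_one hn (fun i => - x i) (by simp [hx])
  have h1 : ∑ i, (-x i)^2 = ∑ i, (x i)^2 := Finset.sum_congr rfl fun i _ => by ring
  have h2 : ∑ i, (-x i)^3 = -∑ i, (x i)^3 := by
    rw [← Finset.sum_neg_distrib]
    exact Finset.sum_congr rfl fun i _ => by ring
  simp only [h1, h2] at hl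
  exact abs_le.2 ⟨by linarith, hu⟩

private lemma trace_pow_eq {n : ℕ} (T : Matrix (Fin n) (Fin n) ℝ) (hT : T.IsHermitian) (k : ℕ) :
    (T^k).trace = ∑ i, (hT.eigenvalues i)^k := by
  set U : Matrix (Fin n) (Fin n) ℝ := (hT.eigenvectorUnitary : Matrix (Fin n) (Fin n) ℝ) with hU
  have h1 : U * star U = 1 := Matrix.mem_unitaryGroup_iff.mp (hT.eigenvectorUnitary).2
  have h2 : star U * U = 1 := Matrix.mem_unitaryGroup_iff'.mp (hT.eigenvectorUnitary).2
  have hD : star U * T * U = diagonal hT.eigenvalues := by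
    have := hT.conjStarAlgAut_star_eigenvectorUnitary
    rw [RCLike.ofReal_real_eq_id] at this
    simpa using this
  have hconj : ∀ m : ℕ, star U * T^m * U = (diagonal hT.eigenvalues)^m := by
    intro m
    induction m with
    | zero => simpa using h2
    | succ m ih =>
      calc star U * T^(m+1) * U
          = (star U * T^m) * 1 * (T * U) := by rw [pow_succ]; noncomm_ring
        _ = (star U * T^m) * (U * star U) * (T * U) := by rw [h1]
        _ = (star U * T^m * U) * (star U * T * U) := by noncomm_ring
        _ = (diagonal hT.eigenvalues)^(m+1) := by rw [ih, hD, pow_succ]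
  have hc := hconj k
  have htr : (star U * T^k * U).trace = (T^k).trace := by
    rw [Matrix.trace_mul_cycle, h1, one_mul]
  rw [hc] at htr
  rw [← htr, Matrix.diagonal_pow, Matrix.trace_diagonal]
  simp [Pi.pow_apply]

/-- The key pointwise curvature estimate: with `H = trace h`, `T = h - (H/n)·I`,
`R_{ikjl} = c(δ_{ij}δ_{kl} - δ_{il}δ_{jk}) + h_{ij}h_{kl} - h_{il}h_{jk}` and
`Ric_{kl} = ∑_i R_{ikil}`, one has
`-∑ R_{ikjl} T_{ij} T_{kl} + ∑ Ric_{jk} T_{ij} T_{ik}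
  ≥ ‖T‖²((1/n)H² - ‖T‖² - ((n-2)/√(n(n-1)))|H|‖T‖ + nc)`,
where `‖T‖ = √(trace(T²))` is the Frobenius norm. -/
theorem gauss_curvature_estimate {n : ℕ} (hn : 2 ≤ n) (c : ℝ)
    (h : Matrix (Fin n) (Fin n) ℝ) (hsym : h.IsSymm)
    (H : ℝ) (hH : H = h.trace)
    (T : Matrix (Fin n) (Fin n) ℝ) (hT : T = h - (H / n) • (1 : Matrix (Fin n) (Fin n) ℝ))
    (R : Fin n → Fin n → Fin n → Fin n → ℝ)
    (hR : ∀ i k j l, R i k j l =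
      c * ((if i = j then (1 : ℝ) else 0) * (if k = l then (1 : ℝ) else 0) -
           (if i = l then (1 : ℝ) else 0) * (if j = k then (1 : ℝ) else 0)) +
      h i j * h k l - h i l * h j k)
    (Ric : Fin n → Fin n → ℝ) (hRic : ∀ k l, Ric k l = ∑ i, R i k i l) :
    -(∑ i, ∑ k, ∑ j, ∑ l, R i k j l * T i j * T k l) +
      (∑ i, ∑ j, ∑ k, Ric j k * T i j * T i k) ≥
    Matrix.trace (T * T) *
      ((1 / n) * H ^ 2 - Matrix.trace (T * T) -
        (((n : ℝ) - 2) / Real.sqrt ((n : ℝ) * ((n : ℝ) - 1))) * |H| *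
          Real.sqrt (Matrix.trace (T * T)) + n * c) := by
  have hn2 : (2:ℝ) ≤ (n:ℝ) := by exact_mod_cast hn
  have hn0 : (n:ℝ) ≠ 0 := by linarith
  have hTsym : ∀ i j, T i j = T j i := by
    intro i j
    rw [hT]
    simp only [Matrix.sub_apply, Matrix.smul_apply, Matrix.one_apply, smul_eq_mul]
    rw [hsym.apply i j]
    by_cases hij : i = j
    · simp [hij]
    · simp [hij, Ne.symm hij]
  have hh : ∀ i j, h i j = T i j + (H/(n:ℝ)) * (if i = j then (1:ℝ) else 0) := by
    intro i j
    rw [hT]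
    simp only [Matrix.sub_apply, Matrix.smul_apply, Matrix.one_apply, smul_eq_mul]
    ring
  have htrh : ∑ i, h i i = H := by rw [hH]; rfl
  have htr : ∑ i, T i i = 0 := by
    have h1 : ∑ i, T i i = (∑ i, h i i) - (n:ℝ)*(H/(n:ℝ)) := by
      rw [hT]
      simp only [Matrix.sub_apply, Matrix.smul_apply, Matrix.one_apply, smul_eq_mul,
        Finset.sum_sub_distrib]
      simp [Finset.sum_const, Finset.card_univ, mul_comm]
    rw [h1, htrh]
    field_simp
    ring
  have hkey : -(∑ i, ∑ k, ∑ j, ∑ l, R i k j l * T i j * T k l) +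
      (∑ i, ∑ j, ∑ k, Ric j k * T i j * T i k) =
      (∑ a, ∑ b, T a b * T b a) * ((1/(n:ℝ))*H^2 - (∑ a, ∑ b, T a b * T b a) + (n:ℝ)*c)
        + H * (∑ a, ∑ b, ∑ k, T a b * T b k * T k a) := by
    rw [quad_eval c (H/(n:ℝ)) T h hh hTsym htr R hR,
      ric_eval c (H/(n:ℝ)) T h hh hTsym htr R hR Ric hRic]
    field_simp
    ring
  have ht2 : Matrix.trace (T * T) = ∑ a, ∑ b, T a b * T b a := by
    simp [Matrix.trace, Matrix.diag, Matrix.mul_apply]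
  have ht3 : Matrix.trace (T * T * T) = ∑ a, ∑ b, ∑ k, T a b * T b k * T k a := by
    calc Matrix.trace (T * T * T) = ∑ a, ∑ k, ∑ b, T a b * T b k * T k a := by
          simp [Matrix.trace, Matrix.diag, Matrix.mul_apply, Finset.sum_mul]
      _ = ∑ a, ∑ b, ∑ k, T a b * T b k * T k a :=
          (swap3 (fun a b k => T a b * T b k * T k a)).symm
  have hherm : T.IsHermitian := Matrix.ext fun i j => by
    simp only [Matrix.conjTranspose_apply, RCLike.star_def, starRingEnd_apply, star_trivial]
    exact hTsym j i
  have e1 := trace_pow_eq T hherm 1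
  rw [pow_one] at e1
  simp only [pow_one] at e1
  have e2 := trace_pow_eq T hherm 2
  rw [pow_two] at e2
  have e3 := trace_pow_eq T hherm 3
  rw [pow_succ, pow_two] at e3
  have htrT : T.trace = 0 := by
    have : T.trace = ∑ i, T i i := rfl
    rw [this, htr]
  have hx0 : ∑ i, hherm.eigenvalues i = 0 := by rw [← e1, htrT]
  have hx2 : ∑ i, (hherm.eigenvalues i)^2 = ∑ a, ∑ b, T a b * T b a := by rw [← e2, ht2]
  have hx3 : ∑ i, (hherm.eigenvalues i)^3 = ∑ a, ∑ b, ∑ k, T a b * T b k * T k a := by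
    rw [← e3, ht3]
  have KS : |∑ a, ∑ b, ∑ k, T a b * T b k * T k a| ≤
      (((n:ℝ) - 2) / Real.sqrt ((n:ℝ) * ((n:ℝ)-1))) *
        ((∑ a, ∑ b, T a b * T b a) * Real.sqrt (∑ a, ∑ b, T a b * T b a)) := by
    have := okumura_abs hn hherm.eigenvalues hx0
    rw [hx2, hx3] at this
    exact this
  have hS2nn : (0:ℝ) ≤ ∑ a, ∑ b, T a b * T b a :=
    Finset.sum_nonneg fun a _ => Finset.sum_nonneg fun b _ => by
      rw [hTsym b a]; exact mul_self_nonneg _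
  rw [ge_iff_le, ht2, hkey]
  set s2 : ℝ := ∑ a, ∑ b, T a b * T b a
  set s3 : ℝ := ∑ a, ∑ b, ∑ k, T a b * T b k * T k a
  set K : ℝ := ((n:ℝ) - 2) / Real.sqrt ((n:ℝ) * ((n:ℝ)-1))
  have h2' : |H| * |s3| ≤ |H| * (K * (s2 * Real.sqrt s2)) :=
    mul_le_mul_of_nonneg_left KS (abs_nonneg H)
  have h3' : -(|H| * |s3|) ≤ H * s3 := by rw [← abs_mul]; exact neg_abs_le _
  nlinarith [h2', h3']
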